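/- Let $X \in \mathbb{R}^{n\times p}$ (not necessarily feasible) with $\Xi_X = X^T X - I_p$, let $E \in \mathbb{R}^{n\times p}$ with $X^T E$ skew-symmetric, $\widehat{W} = -(I_n - X(X^T X)^{-1}X^T)E$ (assume $X^T X$ invertible), $J = I_p + \frac{\tau^2}{4}\widehat{W}^T \widehat{W} + \frac{\tau}{2}X^T E$, and $\widehat{Y} = X(2J^{-1} - I_p) + \tau\widehat{W}J^{-1}$. Then $\widehat{Y}^T\widehat{Y} - I_p = (2J^{-1} - I_p)^T \Xi_X (2J^{-1} - I_p)$, and hence $\|\widehat{Y}^T\widehat{Y} - I_p\|_F \leq \|\Xi_X\|_F$. -/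

import Mathlib

open Matrix

noncomputable def frob {n p : ℕ} (A : Matrix (Fin n) (Fin p) ℝ) : ℝ :=
  Real.sqrt (Matrix.trace (Aᵀ * A))

lemma trace_tm {m p : ℕ} (A : Matrix (Fin m) (Fin p) ℝ) :
    trace (Aᵀ * A) = ∑ j, (fun i => A i j) ⬝ᵥ (fun i => A i j) := by
  simp [trace, Matrix.mul_apply, Matrix.diag, dotProduct, transpose_apply]

lemma frob_transpose {m p : ℕ} (A : Matrix (Fin m) (Fin p) ℝ) : frob Aᵀ = frob A := by
  unfold frob
  rw [transpose_transpose, trace_mul_comm]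

lemma frob_mul_le {m p : ℕ} (K : Matrix (Fin p) (Fin p) ℝ)
    (hK : ∀ v : Fin p → ℝ, (K *ᵥ v) ⬝ᵥ (K *ᵥ v) ≤ v ⬝ᵥ v)
    (B : Matrix (Fin p) (Fin m) ℝ) : frob (K * B) ≤ frob B := by
  unfold frob
  apply Real.sqrt_le_sqrt
  rw [trace_tm, trace_tm]
  apply Finset.sum_le_sum
  intro j _
  have hcol : (fun i => (K * B) i j) = K *ᵥ (fun i => B i j) := by
    funext i; simp [Matrix.mul_apply, Matrix.mulVec, dotProduct]
  rw [hcol]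
  exact hK _

lemma cayley_nonexp {p : ℕ} (J : Matrix (Fin p) (Fin p) ℝ) (hJ : IsUnit J)
    (hc : ∀ u : Fin p → ℝ, u ⬝ᵥ u ≤ u ⬝ᵥ (J *ᵥ u)) (v : Fin p → ℝ) :
    (((2:ℝ) • J⁻¹ - 1) *ᵥ v) ⬝ᵥ (((2:ℝ) • J⁻¹ - 1) *ᵥ v) ≤ v ⬝ᵥ v := by
  have hdet := (Matrix.isUnit_iff_isUnit_det J).mp hJ
  set u := J⁻¹ *ᵥ v with hu
  have hv : J *ᵥ u = v := by
    rw [hu, Matrix.mulVec_mulVec, Matrix.mul_nonsing_inv J hdet, Matrix.one_mulVec]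
  have hKv : ((2:ℝ) • J⁻¹ - 1) *ᵥ v = (2:ℝ) • u - J *ᵥ u := by
    rw [Matrix.sub_mulVec, Matrix.smul_mulVec, Matrix.one_mulVec, hv, hu]
  rw [hKv, ← hv]
  have h1 := hc u
  have expand : ((2:ℝ) • u - J *ᵥ u) ⬝ᵥ ((2:ℝ) • u - J *ᵥ u)
      = (4:ℝ) * (u ⬝ᵥ u) - (4:ℝ) * (u ⬝ᵥ (J *ᵥ u)) + (J *ᵥ u) ⬝ᵥ (J *ᵥ u) := by
    rw [sub_dotProduct, dotProduct_sub, dotProduct_sub, smul_dotProduct,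
      smul_dotProduct, dotProduct_smul, dotProduct_smul,
      dotProduct_comm (J *ᵥ u) u]
    ring_nf
  rw [expand]
  nlinarith [h1]

theorem stmt_12 (n p : ℕ) (X E : Matrix (Fin n) (Fin p) ℝ)
    (hXu : IsUnit (Xᵀ * X))
    (Ξ : Matrix (Fin p) (Fin p) ℝ) (hΞ : Ξ = Xᵀ * X - 1)
    (hskew : (Xᵀ * E)ᵀ = -(Xᵀ * E))
    (W : Matrix (Fin n) (Fin p) ℝ) (hW : W = -((1 - X * (Xᵀ * X)⁻¹ * Xᵀ) * E))
    (τ : ℝ) (hτ : 0 ≤ τ)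
    (J : Matrix (Fin p) (Fin p) ℝ)
    (hJ : J = 1 + (τ ^ 2 / 4) • (Wᵀ * W) + (τ / 2) • (Xᵀ * E))
    (Y : Matrix (Fin n) (Fin p) ℝ)
    (hY : Y = X * ((2 : ℝ) • J⁻¹ - 1) + τ • (W * J⁻¹)) :
    Yᵀ * Y - 1 = ((2 : ℝ) • J⁻¹ - 1)ᵀ * Ξ * ((2 : ℝ) • J⁻¹ - 1) ∧
      frob (Yᵀ * Y - 1) ≤ frob Ξ := by
  -- inverse facts for XᵀX
  have hXdet := (Matrix.isUnit_iff_isUnit_det _).mp hXu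
  have hXinv : Xᵀ * X * (Xᵀ * X)⁻¹ = 1 := Matrix.mul_nonsing_inv _ hXdet
  -- XᵀW = 0
  have hXW : Xᵀ * W = 0 := by
    rw [hW, Matrix.mul_neg, Matrix.sub_mul, Matrix.one_mul, Matrix.mul_sub]
    have key : Xᵀ * (X * (Xᵀ * X)⁻¹ * Xᵀ * E) = Xᵀ * E := by
      simp only [← Matrix.mul_assoc]
      rw [hXinv, Matrix.one_mul]
    rw [key, sub_self, neg_zero]
  have hWX : Wᵀ * X = 0 := by
    have := congrArg Matrix.transpose hXW
    rwa [Matrix.transpose_mul, Matrix.transpose_transpose, Matrix.transpose_zero] at this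
  -- skew dot products vanish
  have hskew0 : ∀ v : Fin p → ℝ, v ⬝ᵥ ((Xᵀ * E) *ᵥ v) = 0 := by
    intro v
    have h2 : v ᵥ* (Xᵀ * E) = ((Xᵀ * E)ᵀ) *ᵥ v := by
      rw [← Matrix.vecMul_transpose, Matrix.transpose_transpose]
    have h : v ⬝ᵥ ((Xᵀ * E) *ᵥ v) = -(v ⬝ᵥ ((Xᵀ * E) *ᵥ v)) := by
      conv_lhs => rw [dotProduct_mulVec, h2, hskew, Matrix.neg_mulVec,
        neg_dotProduct, dotProduct_comm]
    linarith
  -- coercivity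
  have hWnn : ∀ u : Fin p → ℝ, (0:ℝ) ≤ (W *ᵥ u) ⬝ᵥ (W *ᵥ u) := fun u =>
    Finset.sum_nonneg fun i _ => mul_self_nonneg _
  have hWW : ∀ u : Fin p → ℝ, u ⬝ᵥ ((Wᵀ * W) *ᵥ u) = (W *ᵥ u) ⬝ᵥ (W *ᵥ u) := by
    intro u
    rw [← Matrix.mulVec_mulVec, dotProduct_mulVec, Matrix.vecMul_transpose]
  have hcoerc : ∀ u : Fin p → ℝ, u ⬝ᵥ u ≤ u ⬝ᵥ (J *ᵥ u) := by
    intro u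
    rw [hJ, Matrix.add_mulVec, Matrix.add_mulVec, Matrix.one_mulVec,
      Matrix.smul_mulVec, Matrix.smul_mulVec,
      dotProduct_add, dotProduct_add, dotProduct_smul, dotProduct_smul,
      hskew0, hWW]
    have := hWnn u
    have h4 : (0:ℝ) ≤ τ^2/4 := by positivity
    simp only [smul_eq_mul]
    nlinarith
  have hcoercT : ∀ u : Fin p → ℝ, u ⬝ᵥ u ≤ u ⬝ᵥ (Jᵀ *ᵥ u) := by
    intro u
    have h1 : Jᵀ *ᵥ u = u ᵥ* J := Matrix.mulVec_transpose J u
    rw [h1, dotProduct_comm u (u ᵥ* J), ← dotProduct_mulVec]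
    exact hcoerc u
  -- J is a unit
  have hJu : IsUnit J := by
    rw [← Matrix.mulVec_injective_iff_isUnit]
    intro a b hab
    have h0 : J *ᵥ (a - b) = 0 := by rw [Matrix.mulVec_sub, hab, sub_self]
    have h1 := hcoerc (a - b)
    rw [h0, dotProduct_zero] at h1
    have h2 : (a - b) ⬝ᵥ (a - b) = 0 :=
      le_antisymm h1 (Finset.sum_nonneg fun i _ => mul_self_nonneg _)
    exact sub_eq_zero.mp (dotProduct_self_eq_zero.mp h2)
  have hJdet := (Matrix.isUnit_iff_isUnit_det J).mp hJu
  have hJA : J * J⁻¹ = 1 := Matrix.mul_nonsing_inv J hJdet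
  have hAJ : J⁻¹ * J = 1 := Matrix.nonsing_inv_mul J hJdet
  have hAT : J⁻¹ᵀ * Jᵀ = 1 := by
    rw [← Matrix.transpose_mul, hJA, Matrix.transpose_one]
  have hWWs : (Wᵀ * W)ᵀ = Wᵀ * W := by
    rw [Matrix.transpose_mul, Matrix.transpose_transpose]
  have hsum : (2:ℝ) • Jᵀ + (2:ℝ) • J
      = (4:ℝ) • (1 : Matrix (Fin p) (Fin p) ℝ) + (τ^2) • (Wᵀ * W) := by
    have hJTval : Jᵀ = 1 + (τ ^ 2 / 4) • (Wᵀ * W) - (τ / 2) • (Xᵀ * E) := by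
      rw [hJ]
      simp only [Matrix.transpose_add, Matrix.transpose_smul, hWWs, hskew,
        Matrix.transpose_one, smul_neg]
      module
    rw [hJTval, hJ]
    module
  have hkey : (2:ℝ) • J⁻¹ᵀ + (2:ℝ) • J⁻¹
      = J⁻¹ᵀ * ((4:ℝ) • (1:Matrix (Fin p) (Fin p) ℝ) + (τ^2) • (Wᵀ * W)) * J⁻¹ := by
    rw [← hsum]
    have e1 : J⁻¹ᵀ * ((2:ℝ) • Jᵀ + (2:ℝ) • J) * J⁻¹
        = (2:ℝ) • (J⁻¹ᵀ * Jᵀ * J⁻¹) + (2:ℝ) • (J⁻¹ᵀ * (J * J⁻¹)) := by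
      rw [Matrix.mul_add, Matrix.mul_smul, Matrix.mul_smul, Matrix.add_mul,
        Matrix.smul_mul, Matrix.smul_mul, Matrix.mul_assoc J⁻¹ᵀ J J⁻¹]
    rw [e1, hAT, hJA, Matrix.one_mul, Matrix.mul_one, add_comm]
  have hexp2 : J⁻¹ᵀ * ((4:ℝ) • (1:Matrix (Fin p) (Fin p) ℝ) + (τ^2) • (Wᵀ * W)) * J⁻¹
      = (4:ℝ) • (J⁻¹ᵀ * J⁻¹) + (τ^2) • (J⁻¹ᵀ * (Wᵀ * W) * J⁻¹) := by
    rw [Matrix.mul_add, Matrix.add_mul, Matrix.mul_smul, Matrix.mul_smul,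
      Matrix.smul_mul, Matrix.smul_mul, Matrix.mul_one]
  have h5 : (4:ℝ) • (J⁻¹ᵀ * J⁻¹) + (τ^2) • (J⁻¹ᵀ * (Wᵀ * W) * J⁻¹)
      = (2:ℝ) • J⁻¹ᵀ + (2:ℝ) • J⁻¹ := by
    rw [← hexp2, ← hkey]
  have hcore : ((2:ℝ) • J⁻¹ - 1)ᵀ * ((2:ℝ) • J⁻¹ - 1)
      + (τ^2) • (J⁻¹ᵀ * (Wᵀ * W) * J⁻¹) = 1 := by
    have hexp : ((2:ℝ) • J⁻¹ - 1)ᵀ * ((2:ℝ) • J⁻¹ - 1)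
        = (4:ℝ) • (J⁻¹ᵀ * J⁻¹) - (2:ℝ) • J⁻¹ᵀ - (2:ℝ) • J⁻¹ + 1 := by
      rw [Matrix.transpose_sub, Matrix.transpose_smul, Matrix.transpose_one,
        Matrix.sub_mul, Matrix.mul_sub, Matrix.mul_sub,
        Matrix.smul_mul, Matrix.mul_smul, Matrix.mul_one, Matrix.one_mul,
        Matrix.one_mul, smul_smul]
      norm_num
      module
    rw [hexp,
      show (4:ℝ) • (J⁻¹ᵀ * J⁻¹) - (2:ℝ) • J⁻¹ᵀ - (2:ℝ) • J⁻¹ + 1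
          + (τ^2) • (J⁻¹ᵀ * (Wᵀ * W) * J⁻¹)
        = ((4:ℝ) • (J⁻¹ᵀ * J⁻¹) + (τ^2) • (J⁻¹ᵀ * (Wᵀ * W) * J⁻¹))
          - (2:ℝ) • J⁻¹ᵀ - (2:ℝ) • J⁻¹ + 1 from by module,
      h5]
    module
  -- expansion of YᵀY
  have hXWJ : Xᵀ * (W * J⁻¹) = 0 := by
    rw [← Matrix.mul_assoc, hXW, Matrix.zero_mul]
  have hWXK : Wᵀ * (X * ((2:ℝ) • J⁻¹ - 1)) = 0 := by
    rw [← Matrix.mul_assoc, hWX, Matrix.zero_mul]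
  have hYY : Yᵀ * Y = ((2:ℝ) • J⁻¹ - 1)ᵀ * (Xᵀ * X) * ((2:ℝ) • J⁻¹ - 1)
      + (τ^2) • (J⁻¹ᵀ * (Wᵀ * W) * J⁻¹) := by
    rw [hY, Matrix.transpose_add, Matrix.transpose_smul, Matrix.transpose_mul,
      Matrix.transpose_mul, Matrix.add_mul, Matrix.mul_add, Matrix.mul_add,
      Matrix.mul_smul, Matrix.smul_mul, Matrix.smul_mul, Matrix.mul_smul, smul_smul,
      Matrix.mul_assoc (((2:ℝ) • J⁻¹ - 1)ᵀ) Xᵀ (W * J⁻¹), hXWJ, Matrix.mul_zero,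
      smul_zero, add_zero,
      Matrix.mul_assoc J⁻¹ᵀ Wᵀ (X * ((2:ℝ) • J⁻¹ - 1)), hWXK, Matrix.mul_zero,
      smul_zero, zero_add]
    have : τ * τ = τ^2 := (sq τ).symm
    rw [this]
    congr 1
    · simp only [Matrix.mul_assoc]
    · congr 1
      simp only [Matrix.mul_assoc]
  -- main identity
  have hid : Yᵀ * Y - 1 = ((2 : ℝ) • J⁻¹ - 1)ᵀ * Ξ * ((2 : ℝ) • J⁻¹ - 1) := by
    have hRHS : ((2:ℝ) • J⁻¹ - 1)ᵀ * Ξ * ((2:ℝ) • J⁻¹ - 1)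
        = ((2:ℝ) • J⁻¹ - 1)ᵀ * (Xᵀ * X) * ((2:ℝ) • J⁻¹ - 1)
          - ((2:ℝ) • J⁻¹ - 1)ᵀ * ((2:ℝ) • J⁻¹ - 1) := by
      rw [hΞ, Matrix.mul_sub ((2:ℝ) • J⁻¹ - 1)ᵀ (Xᵀ * X) 1, Matrix.mul_one,
        Matrix.sub_mul]
    have h6 : (τ^2) • (J⁻¹ᵀ * (Wᵀ * W) * J⁻¹)
        = 1 - ((2:ℝ) • J⁻¹ - 1)ᵀ * ((2:ℝ) • J⁻¹ - 1) :=
      eq_sub_iff_add_eq.mpr (by rw [add_comm]; exact hcore)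
    rw [hYY, hRHS, h6]
    module
  refine ⟨hid, ?_⟩
  -- Frobenius bound
  have hJTu : IsUnit Jᵀ := (Matrix.isUnit_iff_isUnit_det _).mpr
    (by rw [Matrix.det_transpose]; exact hJdet)
  have hKTeq : ((2:ℝ) • J⁻¹ - 1)ᵀ = (2:ℝ) • (Jᵀ)⁻¹ - 1 := by
    rw [Matrix.transpose_sub, Matrix.transpose_smul, Matrix.transpose_one,
      Matrix.transpose_nonsing_inv]
  have hKT : ∀ v : Fin p → ℝ,
      (((2:ℝ) • J⁻¹ - 1)ᵀ *ᵥ v) ⬝ᵥ (((2:ℝ) • J⁻¹ - 1)ᵀ *ᵥ v) ≤ v ⬝ᵥ v := by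
    rw [hKTeq]
    exact cayley_nonexp Jᵀ hJTu hcoercT
  rw [hid]
  calc frob (((2:ℝ) • J⁻¹ - 1)ᵀ * Ξ * ((2:ℝ) • J⁻¹ - 1))
      = frob (((2:ℝ) • J⁻¹ - 1)ᵀ * (Ξ * ((2:ℝ) • J⁻¹ - 1))) := by
        rw [Matrix.mul_assoc]
    _ ≤ frob (Ξ * ((2:ℝ) • J⁻¹ - 1)) := frob_mul_le _ hKT _
    _ = frob ((Ξ * ((2:ℝ) • J⁻¹ - 1))ᵀ) := (frob_transpose _).symm
    _ = frob (((2:ℝ) • J⁻¹ - 1)ᵀ * Ξᵀ) := by rw [Matrix.transpose_mul]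
    _ ≤ frob Ξᵀ := frob_mul_le _ hKT _
    _ = frob Ξ := frob_transpose _
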